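/- arXiv:1109.6138 — 4 statements merged into one kernel-verified Lean document; each statement's English description precedes it below -/
import Mathlib

section
/- Let a_1,...,a_m be real numbers (m ≥ 2) with ∑ a_i = 0 and ∑ a_i² = b² for some constant b ≥ 0. Then -((m-2)/√(m(m-1))) b³ ≤ ∑ a_i³ ≤ ((m-2)/√(m(m-1))) b³. -/
set_option maxHeartbeats 1000000

private lemma okumura_aux (m : ℕ) (hm : 2 ≤ m) (a : Fin m → ℝ) (b : ℝ) (hb : 0 ≤ b)
    (hsum : ∑ i, a i = 0) (hsq : ∑ i, (a i) ^ 2 = b ^ 2) :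
    -(((m : ℝ) - 2) / Real.sqrt ((m : ℝ) * ((m : ℝ) - 1))) * b ^ 3 ≤ ∑ i, (a i) ^ 3 := by
  set M : ℝ := (m : ℝ) with hMdef
  have hM : 2 ≤ M := by rw [hMdef]; exact_mod_cast hm
  have hMM : 0 < M * (M - 1) := by nlinarith
  set S : ℝ := Real.sqrt (M * (M - 1)) with hSdef
  have hS : 0 < S := Real.sqrt_pos.2 hMM
  have hS2 : S ^ 2 = M * (M - 1) := Real.sq_sqrt hMM.le
  set c : ℝ := b / S with hcdef
  have hc : 0 ≤ c := div_nonneg hb hS.le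
  have hcS : c * S = b := div_mul_cancel₀ b hS.ne'
  have hc2 : c ^ 2 * (M * (M - 1)) = b ^ 2 := by
    rw [← hS2, ← hcS]; ring
  -- pointwise bound: a i ≥ -(M-1)*c
  have hpt : ∀ i, -((M - 1) * c) ≤ a i := by
    intro i
    have hcard : (((Finset.univ : Finset (Fin m)).erase i).card : ℝ) = M - 1 := by
      rw [Finset.card_erase_of_mem (Finset.mem_univ i)]
      simp [hMdef]
      rw [Nat.cast_sub (by omega)]
      simp
    have hrest : ∑ j ∈ Finset.univ.erase i, a j = -a i := by
      have := Finset.sum_erase_add Finset.univ a (Finset.mem_univ i)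
      linarith
    have hrest2 : ∑ j ∈ Finset.univ.erase i, (a j) ^ 2 = b ^ 2 - (a i) ^ 2 := by
      have := Finset.sum_erase_add Finset.univ (fun j => (a j) ^ 2) (Finset.mem_univ i)
      linarith
    have hcs := sq_sum_le_card_mul_sum_sq (s := Finset.univ.erase i) (f := a)
    rw [hrest, hrest2, hcard] at hcs
    have hsqle : (a i) ^ 2 ≤ ((M - 1) * c) ^ 2 := by
      have h1 : (a i) ^ 2 ≤ (M - 1) * (b ^ 2 - (a i) ^ 2) := by nlinarith [hcs]
      nlinarith [hc2]
    exact (abs_le_of_sq_le_sq' hsqle (by nlinarith [hc])).1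
  -- pointwise cubic bound
  have hcube : ∀ i, -(M - 3) * c * (a i) ^ 2 + (2 * M - 3) * c ^ 2 * a i - (M - 1) * c ^ 3
      ≤ (a i) ^ 3 := by
    intro i
    nlinarith [mul_nonneg (by linarith [hpt i] : (0:ℝ) ≤ a i + (M - 1) * c)
      (sq_nonneg (a i - c))]
  have hsum3 : ∑ i, (-(M - 3) * c * (a i) ^ 2 + (2 * M - 3) * c ^ 2 * a i - (M - 1) * c ^ 3)
      ≤ ∑ i, (a i) ^ 3 := Finset.sum_le_sum fun i _ => hcube i
  have hexp : ∑ i, (-(M - 3) * c * (a i) ^ 2 + (2 * M - 3) * c ^ 2 * a i - (M - 1) * c ^ 3)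
      = -(M - 3) * c * b ^ 2 - M * ((M - 1) * c ^ 3) := by
    rw [Finset.sum_sub_distrib, Finset.sum_add_distrib, ← Finset.mul_sum, ← Finset.mul_sum,
      hsum, hsq]
    simp [hMdef]
    try ring
  have hlhs : -((M - 2) / S) * b ^ 3 = -(M - 2) * c * b ^ 2 := by
    rw [hcdef]; ring
  rw [hlhs]
  have hM3 : M * ((M - 1) * c ^ 3) = c * b ^ 2 := by rw [← hc2]; ring
  rw [hexp] at hsum3
  linarith

/-- Okumura-type lemma: if `∑ a i = 0` and `∑ (a i)² = b²` with `b ≥ 0`, then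
`-((m-2)/√(m(m-1))) b³ ≤ ∑ (a i)³ ≤ ((m-2)/√(m(m-1))) b³`. -/
theorem okumura_lemma (m : ℕ) (hm : 2 ≤ m) (a : Fin m → ℝ) (b : ℝ) (hb : 0 ≤ b)
    (hsum : ∑ i, a i = 0) (hsq : ∑ i, (a i) ^ 2 = b ^ 2) :
    -(((m : ℝ) - 2) / Real.sqrt ((m : ℝ) * ((m : ℝ) - 1))) * b ^ 3 ≤ ∑ i, (a i) ^ 3 ∧
      ∑ i, (a i) ^ 3 ≤ (((m : ℝ) - 2) / Real.sqrt ((m : ℝ) * ((m : ℝ) - 1))) * b ^ 3 := by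
  constructor
  · exact okumura_aux m hm a b hb hsum hsq
  · have h := okumura_aux m hm (fun i => -a i) b hb (by simpa using hsum)
      (by simpa using hsq)
    have hneg : ∑ i, (-a i) ^ 3 = -∑ i, (a i) ^ 3 := by
      rw [← Finset.sum_neg_distrib]
      exact Finset.sum_congr rfl fun i _ => by ring
    rw [hneg] at h
    linarith
end

section
/- Let a_1,...,a_m be real numbers (m ≥ 2) with ∑ a_i = 0 and ∑ a_i² = b² with b > 0. Equality ∑ a_i³ = ((m-2)/√(m(m-1))) b³ holds if and only if (m-1) of the a_i's are non-positive and equal to each other. -/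
set_option maxHeartbeats 1000000 in
/-- Equality case of the Okumura-type lemma: with `∑ a i = 0`, `∑ (a i)² = b²`, `b > 0`,
equality `∑ (a i)³ = ((m-2)/√(m(m-1))) b³` holds iff `m-1` of the `a i`'s are
non-positive and equal to each other. -/
theorem okumura_equality (m : ℕ) (hm : 2 ≤ m) (a : Fin m → ℝ) (b : ℝ) (hb : 0 < b)
    (hsum : ∑ i, a i = 0) (hsq : ∑ i, (a i) ^ 2 = b ^ 2) :
    ∑ i, (a i) ^ 3 = (((m : ℝ) - 2) / Real.sqrt ((m : ℝ) * ((m : ℝ) - 1))) * b ^ 3 ↔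
      ∃ i₀ : Fin m, ∃ v : ℝ, v ≤ 0 ∧ ∀ j : Fin m, j ≠ i₀ → a j = v := by
  have hm2 : (2:ℝ) ≤ (m:ℝ) := by exact_mod_cast hm
  set M : ℝ := (m:ℝ) * ((m:ℝ) - 1) with hM
  have hMpos : 0 < M := by nlinarith
  set s : ℝ := Real.sqrt M with hs
  have hspos : 0 < s := Real.sqrt_pos.mpr hMpos
  have hs2 : s ^ 2 = M := Real.sq_sqrt hMpos.le
  set c : ℝ := b / s with hc
  have hcpos : 0 < c := div_pos hb hspos
  have hb2 : b ^ 2 = M * c ^ 2 := by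
    rw [hc, div_pow]
    rw [hs2]
    field_simp
  set d : ℝ := ((m:ℝ) - 1) * c with hd
  have hdpos : 0 < d := by
    rw [hd]; nlinarith
  clear_value M s c d
  -- cardinality fact
  have hcard : ((Finset.univ : Finset (Fin m)).card : ℝ) = (m : ℝ) := by
    simp
  -- each a i ≤ d
  have hbound : ∀ i, a i ≤ d := by
    intro i
    have h1 : a i + ∑ j ∈ Finset.univ.erase i, a j = 0 := by
      rw [Finset.add_sum_erase Finset.univ a (Finset.mem_univ i), hsum]
    have h2 : (a i)^2 + ∑ j ∈ Finset.univ.erase i, (a j)^2 = b^2 := by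
      rw [Finset.add_sum_erase Finset.univ (fun j => (a j)^2) (Finset.mem_univ i), hsq]
    have hcau := sq_sum_le_card_mul_sum_sq (s := Finset.univ.erase i) (f := a) (α := ℝ)
    have hcard' : ((Finset.univ.erase i).card : ℝ) = (m:ℝ) - 1 := by
      rw [Finset.card_erase_of_mem (Finset.mem_univ i)]
      rw [Nat.cast_sub (by simp; omega : 1 ≤ Finset.univ.card)]
      simp
    rw [hcard'] at hcau
    have hse : ∑ j ∈ Finset.univ.erase i, a j = - a i := by linarith
    have hse2 : ∑ j ∈ Finset.univ.erase i, (a j)^2 = b^2 - (a i)^2 := by linarith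
    rw [hse, hse2] at hcau
    -- (a i)^2 ≤ (m-1)(b² - (a i)²), so m (a i)² ≤ (m-1) b² = m d²
    have hd2 : (m:ℝ) * d^2 = ((m:ℝ) - 1) * b^2 := by
      rw [hd, hb2, hM]; ring
    by_contra hcon
    push_neg at hcon
    have h3 : d^2 < (a i)^2 := by nlinarith
    have h4 : (m:ℝ) * (a i)^2 ≤ (m:ℝ) * d^2 := by nlinarith [hcau, hd2]
    nlinarith [mul_pos (show (0:ℝ) < (m:ℝ) by linarith) (show (0:ℝ) < (a i)^2 - d^2 by linarith)]
  -- key identity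
  have hid : ∑ i, (a i + c)^2 * (a i - d)
      = (∑ i, (a i)^3) - ((m:ℝ) - 2) * c * b^2 := by
    have expand : ∀ i ∈ (Finset.univ : Finset (Fin m)), (a i + c)^2 * (a i - d)
        = (a i)^3 + (2*c - d)*(a i)^2 + (c^2 - 2*c*d)*(a i) + (- (c^2*d)) := by
      intro i _; ring
    rw [Finset.sum_congr rfl expand]
    rw [Finset.sum_add_distrib, Finset.sum_add_distrib, Finset.sum_add_distrib,
        Finset.sum_const, ← Finset.mul_sum, ← Finset.mul_sum, hsq, hsum,
        nsmul_eq_mul, hcard]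
    have : (2*c - d)*b^2 + (c^2 - 2*c*d)*0 + (m:ℝ) * (-(c^2*d))
        = - (((m:ℝ) - 2) * c * b^2) := by
      rw [hd, hb2, hM]; ring
    linarith [this]
  -- RHS constant rewriting
  have hrhs : (((m : ℝ) - 2) / s) * b ^ 3 = ((m:ℝ) - 2) * c * b^2 := by
    rw [hc]; ring
  rw [hrhs]
  have hkey : (∑ i, (a i)^3 = ((m:ℝ) - 2) * c * b^2)
      ↔ ∑ i, (a i + c)^2 * (a i - d) = 0 := by
    constructor
    · intro h; linarith [hid]
    · intro h; linarith [hid]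
  rw [hkey]
  constructor
  · intro h0
    have hnonpos : ∀ i ∈ (Finset.univ : Finset (Fin m)), (a i + c)^2 * (a i - d) ≤ 0 := by
      intro i _
      exact mul_nonpos_of_nonneg_of_nonpos (sq_nonneg _) (by linarith [hbound i])
    have hall := (Finset.sum_eq_zero_iff_of_nonpos hnonpos).mp h0
    have hcase : ∀ i, a i = -c ∨ a i = d := by
      intro i
      have := hall i (Finset.mem_univ i)
      rcases mul_eq_zero.mp this with h | h
      · left; have := pow_eq_zero_iff (n := 2) (by norm_num) |>.mp h; linarith
      · right; linarith
    -- there exists i₀ with a i₀ = d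
    have hex : ∃ i₀, a i₀ = d := by
      by_contra hno
      push_neg at hno
      have : ∀ i ∈ (Finset.univ : Finset (Fin m)), a i = -c := by
        intro i _
        rcases hcase i with h | h
        · exact h
        · exact absurd h (hno i)
      have hS : ∑ i, a i = (m:ℝ) * (-c) := by
        rw [Finset.sum_congr rfl this, Finset.sum_const, nsmul_eq_mul, hcard]
      rw [hsum] at hS
      nlinarith
    obtain ⟨i₀, hi₀⟩ := hex
    refine ⟨i₀, -c, by linarith, ?_⟩
    intro j hj
    rcases hcase j with h | h
    · exact h
    · exfalso
      -- two indices equal to d: contradiction with sum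
      have hsc : ∑ i, (a i + c) = (m:ℝ) * c := by
        rw [Finset.sum_add_distrib, hsum, Finset.sum_const, nsmul_eq_mul, hcard]; ring
      have hnn : ∀ i ∈ (Finset.univ : Finset (Fin m)), i ∉ ({j, i₀} : Finset (Fin m)) →
          0 ≤ a i + c := by
        intro i _ _
        rcases hcase i with h' | h' <;> rw [h'] <;> [linarith; linarith]
      have hpair : ∑ i ∈ ({j, i₀} : Finset (Fin m)), (a i + c) = 2 * ((m:ℝ) * c) := by
        rw [Finset.sum_pair hj, h, hi₀, hd]; ring
      have hle : ∑ i ∈ ({j, i₀} : Finset (Fin m)), (a i + c) ≤ ∑ i, (a i + c) :=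
        Finset.sum_le_sum_of_subset_of_nonneg (Finset.subset_univ _) hnn
      rw [hpair, hsc] at hle
      nlinarith
  · rintro ⟨i₀, v, hv, hav⟩
    -- first, a i₀ = -(m-1) v and v = -c
    have h1 : ∑ j ∈ Finset.univ.erase i₀, a j = ((m:ℝ) - 1) * v := by
      have : ∀ j ∈ Finset.univ.erase i₀, a j = v := by
        intro j hjmem
        exact hav j (Finset.mem_erase.mp hjmem).1
      rw [Finset.sum_congr rfl this, Finset.sum_const, nsmul_eq_mul,
          Finset.card_erase_of_mem (Finset.mem_univ i₀),
          Nat.cast_sub (by simp; omega : 1 ≤ Finset.univ.card)]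
      simp
    have h2 : ∑ j ∈ Finset.univ.erase i₀, (a j)^2 = ((m:ℝ) - 1) * v^2 := by
      have : ∀ j ∈ Finset.univ.erase i₀, (a j)^2 = v^2 := by
        intro j hjmem
        rw [hav j (Finset.mem_erase.mp hjmem).1]
      rw [Finset.sum_congr rfl this, Finset.sum_const, nsmul_eq_mul,
          Finset.card_erase_of_mem (Finset.mem_univ i₀),
          Nat.cast_sub (by simp; omega : 1 ≤ Finset.univ.card)]
      simp
    have hai₀ : a i₀ = -(((m:ℝ) - 1) * v) := by
      have := Finset.add_sum_erase Finset.univ a (Finset.mem_univ i₀)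
      rw [hsum, h1] at this
      linarith
    have hsq' : (a i₀)^2 + ((m:ℝ) - 1) * v^2 = b^2 := by
      have := Finset.add_sum_erase Finset.univ (fun j => (a j)^2) (Finset.mem_univ i₀)
      rw [hsq, h2] at this
      have this' : (a i₀)^2 + ((m:ℝ) - 1) * v^2 = b^2 := this
      linarith [this']
    have hv2 : v^2 = c^2 := by
      rw [hai₀] at hsq'
      have hMv : M * v^2 = M * c^2 := by
        rw [← hb2, hM]; linear_combination hsq'
      exact mul_left_cancel₀ (ne_of_gt hMpos) hMv
    have hvc : v = -c := by
      have : (v - c) * (v + c) = 0 := by nlinarith [hv2]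
      rcases mul_eq_zero.mp this with h | h
      · exfalso; nlinarith
      · linarith
    -- now every term of the sum vanishes
    apply Finset.sum_eq_zero
    intro i _
    by_cases hi : i = i₀
    · subst hi
      have : a i - d = 0 := by rw [hai₀, hvc, hd]; ring
      rw [this, mul_zero]
    · have : a i + c = 0 := by rw [hav i hi, hvc]; ring
      rw [this]; ring
end

section
/- Let m ≥ 3 be an integer and H be a real number with H² > C(m) = ((m-1)(m²+4) + (m-2)√((m-1)(m-2)(m²+m+2)))/(2m³). Define the polynomial P(t) = m(m-1)t² - (3m²-4)H² t + m H² (m² H² - (m-2)²). Then P(t) ≥ P(1) > 0 for all t ≤ 1. -/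
set_option maxHeartbeats 1000000 in
/-- If `m ≥ 3` and `H² > C(m)`, then the polynomial
`P(t) = m(m-1)t² - (3m²-4)H² t + m H² (m² H² - (m-2)²)` satisfies `P(t) ≥ P(1) > 0`
for all `t ≤ 1`. -/
theorem poly_estimate (m : ℕ) (hm : 3 ≤ m) (H : ℝ)
    (hH : H ^ 2 >
      (((m : ℝ) - 1) * ((m : ℝ) ^ 2 + 4) +
          ((m : ℝ) - 2) * Real.sqrt (((m : ℝ) - 1) * ((m : ℝ) - 2) * ((m : ℝ) ^ 2 + (m : ℝ) + 2))) /
        (2 * (m : ℝ) ^ 3))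
    (P : ℝ → ℝ)
    (hP : ∀ t : ℝ, P t = (m : ℝ) * ((m : ℝ) - 1) * t ^ 2 - (3 * (m : ℝ) ^ 2 - 4) * H ^ 2 * t +
      (m : ℝ) * H ^ 2 * ((m : ℝ) ^ 2 * H ^ 2 - ((m : ℝ) - 2) ^ 2)) :
    ∀ t : ℝ, t ≤ 1 → P t ≥ P 1 ∧ P 1 > 0 := by
  set M := (m : ℝ) with hMdef
  have hM3 : (3:ℝ) ≤ M := by rw [hMdef]; exact_mod_cast hm
  have h1 : (0:ℝ) ≤ M - 1 := by linarith
  have h2 : (0:ℝ) ≤ M - 2 := by linarith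
  have hD : 0 ≤ (M-1)*(M-2)*(M^2+M+2) := by
    apply mul_nonneg (mul_nonneg h1 h2); nlinarith
  set s := Real.sqrt ((M-1)*(M-2)*(M^2+M+2)) with hsdef
  have hs0 : 0 ≤ s := Real.sqrt_nonneg _
  have hs2 : s^2 = (M-1)*(M-2)*(M^2+M+2) := Real.sq_sqrt hD
  have hMpos : (0:ℝ) < 2*M^3 := by nlinarith
  have hH' : (M-1)*(M^2+4) + (M-2)*s < 2*M^3*H^2 := by
    have h := hH
    rw [gt_iff_lt, div_lt_iff₀ hMpos] at h
    nlinarith [h]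
  -- key: (M-2)*(3*M^2-4)*s ≥ (M-1)*(M^2-4)^2
  have hA2 : ((M-2)*(3*M^2-4)*s)^2
      = ((M-1)*(M^2-4)^2)^2 + (M-1)*((M-2)^3*(4*M^4*(2*M^2+M-2))) := by
    have he : ((M-2)*(3*M^2-4)*s)^2 = (M-2)^2*(3*M^2-4)^2 * s^2 := by ring
    rw [he, hs2]; ring
  have hpos : 0 ≤ (M-1)*((M-2)^3*(4*M^4*(2*M^2+M-2))) := by
    apply mul_nonneg h1
    apply mul_nonneg (pow_nonneg h2 3)
    nlinarith
  have hAnn : 0 ≤ (M-2)*(3*M^2-4)*s := by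
    apply mul_nonneg _ hs0
    nlinarith
  have hBnn : 0 ≤ (M-1)*(M^2-4)^2 := by positivity
  have hkey : (M-1)*(M^2-4)^2 ≤ (M-2)*(3*M^2-4)*s :=
    le_of_pow_le_pow_left₀ two_ne_zero hAnn (by linarith [hA2, hpos])
  -- (3M²-4)H² > 2M(M-1)
  have h34pos : (0:ℝ) < 3*M^2 - 4 := by nlinarith
  have h5 : (3*M^2-4) * ((M-1)*(M^2+4) + (M-2)*s) < (3*M^2-4) * (2*M^3*H^2) :=
    mul_lt_mul_of_pos_left hH' h34pos
  have h6 : 2*M^3 * (2*M*(M-1)) < 2*M^3 * ((3*M^2-4)*H^2) := by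
    ring_nf at h5 hkey ⊢
    linarith [h5, hkey]
  have hB1 : 2*M*(M-1) < (3*M^2-4)*H^2 := lt_of_mul_lt_mul_left h6 (le_of_lt hMpos)
  -- P 1 > 0
  have hu : (M-2)*s < 2*M^3*H^2 - (M-1)*(M^2+4) := by linarith
  have hu0 : 0 ≤ (M-2)*s := mul_nonneg h2 hs0
  have h7 : ((M-2)*s)^2 < (2*M^3*H^2 - (M-1)*(M^2+4))^2 := by
    exact pow_lt_pow_left₀ hu hu0 (by norm_num)
  have h7' : (M-2)^2 * ((M-1)*(M-2)*(M^2+M+2)) < (2*M^3*H^2 - (M-1)*(M^2+4))^2 := by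
    calc (M-2)^2 * ((M-1)*(M-2)*(M^2+M+2)) = ((M-2)*s)^2 := by rw [mul_pow, hs2]
    _ < _ := h7
  have hid : (2*M^3*H^2 - (M-1)*(M^2+4))^2 - (M-2)^2 * ((M-1)*(M-2)*(M^2+M+2))
      = 4*M^3*(M^3*H^4 - (M-1)*(M^2+4)*H^2 + M*(M-1)) := by ring
  have h8 : 0 < 4*M^3*(M^3*H^4 - (M-1)*(M^2+4)*H^2 + M*(M-1)) := by linarith [h7', hid]
  have h4 : (0:ℝ) < 4*M^3 := by nlinarith
  have h9 : 0 < M^3*H^4 - (M-1)*(M^2+4)*H^2 + M*(M-1) := by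
    rcases mul_pos_iff.mp h8 with ⟨_, h⟩ | ⟨h, _⟩
    · exact h
    · linarith
  have hP1 : P 1 > 0 := by
    rw [hP]; nlinarith [h9]
  intro t ht
  refine ⟨?_, hP1⟩
  rw [hP, hP]
  nlinarith [mul_nonneg (show (0:ℝ) ≤ 1 - t by linarith)
    (show (0:ℝ) ≤ (3*M^2-4)*H^2 - M*(M-1)*(t+1) by nlinarith [hB1])]
end

section
/- Let A be a symmetric m × m real matrix with trace(A) = mμ and trace(A²) = S. Then the traceless part φ = A - μ·Id satisfies trace(φ²) = S - mμ², and trace(A³) ≥ -((m-2)/√(m(m-1)))(S - mμ²)^{3/2} + 3μ(S - mμ²) + mμ³. -/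
lemma okumura {m : ℕ} (hm : 2 ≤ m) (x : Fin m → ℝ) (h0 : ∑ i, x i = 0) :
    ∑ i, (x i) ^ 3 ≥ -(((m : ℝ) - 2) / Real.sqrt ((m : ℝ) * ((m : ℝ) - 1)))
      * Real.sqrt (∑ i, (x i) ^ 2) ^ 3 := by
  set M : ℝ := (m : ℝ) with hMdef
  have hM : (2 : ℝ) ≤ M := by rw [hMdef]; exact_mod_cast hm
  set s : ℝ := ∑ i, (x i) ^ 2 with hsdef
  have hs0 : 0 ≤ s := Finset.sum_nonneg fun i _ => sq_nonneg _
  have hc : (0 : ℝ) < M * (M - 1) := by nlinarith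
  set a : ℝ := Real.sqrt (s / (M * (M - 1))) with hadef
  have ha0 : 0 ≤ a := Real.sqrt_nonneg _
  have ha2 : a ^ 2 = s / (M * (M - 1)) := Real.sq_sqrt (by positivity)
  have hsa : s = M * (M - 1) * a ^ 2 := by
    rw [ha2]; field_simp; rw [mul_div_assoc, div_self (by linarith : M - 1 ≠ 0), mul_one]
  set b : ℝ := -(M - 1) * a with hbdef
  -- each x i is ≥ b
  have hxb : ∀ i, b ≤ x i := by
    intro i
    have hsum : ∑ j ∈ Finset.univ.erase i, x j = -(x i) := by
      have := Finset.add_sum_erase Finset.univ x (Finset.mem_univ i)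
      linarith [h0, this]
    have hCS : (∑ j ∈ Finset.univ.erase i, x j) ^ 2
        ≤ (Finset.univ.erase i).card * ∑ j ∈ Finset.univ.erase i, (x j) ^ 2 :=
      sq_sum_le_card_mul_sum_sq
    have hcard : ((Finset.univ.erase i).card : ℝ) = M - 1 := by
      rw [Finset.card_erase_of_mem (Finset.mem_univ i)]
      simp [hMdef]
      rw [Nat.cast_sub (by omega)]
      simp
    have hrest : ∑ j ∈ Finset.univ.erase i, (x j) ^ 2 = s - (x i) ^ 2 := by
      have h' : (x i) ^ 2 + ∑ j ∈ Finset.univ.erase i, (x j) ^ 2 = s := by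
        simpa [hsdef] using Finset.add_sum_erase Finset.univ (fun j => (x j) ^ 2) (Finset.mem_univ i)
      linarith
    rw [hsum, hcard, hrest] at hCS
    -- so M * (x i)^2 ≤ (M-1) * s, and b^2 = (M-1)^2 a^2 = (M-1)/M * s
    have hb2 : M * b ^ 2 = (M - 1) * s := by
      rw [hbdef, hsa]; ring
    have hx2 : M * (x i) ^ 2 ≤ (M - 1) * s := by nlinarith
    have hbneg : b ≤ 0 := by
      rw [hbdef]; nlinarith
    have hxib2 : (x i) ^ 2 ≤ b ^ 2 := by nlinarith [hx2, hb2, hM]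
    nlinarith [hxib2, hbneg, sq_nonneg (x i + b), sq_nonneg (x i - b)]
  -- pointwise cubic inequality
  have hpt : ∀ i, (2 * a + b) * (x i) ^ 2 - (a ^ 2 + 2 * a * b) * (x i) + a ^ 2 * b
      ≤ (x i) ^ 3 := by
    intro i
    nlinarith [sq_nonneg (x i - a), hxb i]
  have hsum3 : (2 * a + b) * s - (a ^ 2 + 2 * a * b) * 0 + M * (a ^ 2 * b) ≤ ∑ i, (x i) ^ 3 := by
    calc (2 * a + b) * s - (a ^ 2 + 2 * a * b) * 0 + M * (a ^ 2 * b)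
        = ∑ i, ((2 * a + b) * (x i) ^ 2 - (a ^ 2 + 2 * a * b) * (x i) + a ^ 2 * b) := by
          rw [hsdef]
          rw [Finset.sum_add_distrib, Finset.sum_sub_distrib, ← Finset.mul_sum, ← Finset.mul_sum,
            Finset.sum_const, Finset.card_univ, Fintype.card_fin]
          rw [h0, hMdef]
          ring
      _ ≤ ∑ i, (x i) ^ 3 := Finset.sum_le_sum fun i _ => hpt i
  -- identify RHS
  have hsqrt : Real.sqrt s = Real.sqrt (M * (M - 1)) * a := by
    rw [hsa, Real.sqrt_mul hc.le, Real.sqrt_sq ha0]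
  have hsc : Real.sqrt (M * (M - 1)) ^ 2 = M * (M - 1) := Real.sq_sqrt hc.le
  have hscpos : 0 < Real.sqrt (M * (M - 1)) := Real.sqrt_pos.mpr hc
  have hrhs : -((M - 2) / Real.sqrt (M * (M - 1))) * Real.sqrt s ^ 3
      = (2 * a + b) * s - (a ^ 2 + 2 * a * b) * 0 + M * (a ^ 2 * b) := by
    rw [hsqrt]
    have key : -((M - 2) / Real.sqrt (M * (M - 1))) * (Real.sqrt (M * (M - 1)) * a) ^ 3
        = -(M - 2) * (Real.sqrt (M * (M - 1))) ^ 2 * a ^ 3 := by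
      have h := div_mul_cancel₀ (M - 2) (ne_of_gt hscpos)
      calc -((M - 2) / Real.sqrt (M * (M - 1))) * (Real.sqrt (M * (M - 1)) * a) ^ 3
          = -((M - 2) / Real.sqrt (M * (M - 1)) * Real.sqrt (M * (M - 1)))
            * (Real.sqrt (M * (M - 1)) ^ 2 * a ^ 3) := by ring
        _ = _ := by rw [h]; ring
    rw [key, hsc, hsa, hbdef]
    ring
  rw [hrhs]
  exact hsum3

lemma conj_pow_aux {n : Type*} [Fintype n] [DecidableEq n]
    (V D : Matrix n n ℝ) (hV : star V * V = 1) (hV' : V * star V = 1) (k : ℕ) :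
    (V * D * star V) ^ k = V * D ^ k * star V := by
  induction k with
  | zero => simpa using hV'.symm
  | succ k ih =>
    rw [pow_succ, ih, pow_succ]
    simp only [Matrix.mul_assoc]
    rw [← Matrix.mul_assoc (star V) V (D * star V), hV, Matrix.one_mul]

lemma trace_pow_eq_sum_pow {n : Type*} [Fintype n] [DecidableEq n]
    {φ : Matrix n n ℝ} (h : φ.IsHermitian) (k : ℕ) :
    (φ ^ k).trace = ∑ i, (h.eigenvalues i) ^ k := by
  have hV : star (h.eigenvectorUnitary : Matrix n n ℝ) * (h.eigenvectorUnitary : Matrix n n ℝ) = 1 := by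
    simpa using unitary.coe_star_mul_self h.eigenvectorUnitary
  have hV' : (h.eigenvectorUnitary : Matrix n n ℝ) * star (h.eigenvectorUnitary : Matrix n n ℝ) = 1 := by
    simpa using unitary.coe_mul_star_self h.eigenvectorUnitary
  have hD : φ = (h.eigenvectorUnitary : Matrix n n ℝ) * Matrix.diagonal h.eigenvalues
      * star (h.eigenvectorUnitary : Matrix n n ℝ) := by
    have := h.spectral_theorem
    simpa [RCLike.ofReal_real_eq_id] using this
  conv_lhs => rw [hD]
  rw [conj_pow_aux _ _ hV hV', Matrix.trace_mul_cycle, hV, Matrix.one_mul,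
    Matrix.diagonal_pow, Matrix.trace_diagonal]
  simp [Pi.pow_apply]


/-- For a symmetric `m × m` matrix `A` with `trace A = mμ` and `trace(A²) = S`, the traceless
part `φ = A - μ•1` satisfies `trace(φ²) = S - mμ²`, and
`trace(A³) ≥ -((m-2)/√(m(m-1))) (S - mμ²)^{3/2} + 3μ(S - mμ²) + mμ³`. -/
theorem trace_cube_lower_bound (m : ℕ) (hm : 2 ≤ m) (A : Matrix (Fin m) (Fin m) ℝ)
    (hA : A.IsSymm) (μ S : ℝ) (htr : A.trace = (m : ℝ) * μ) (htr2 : (A ^ 2).trace = S)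
    (φ : Matrix (Fin m) (Fin m) ℝ)
    (hφ : φ = A - μ • (1 : Matrix (Fin m) (Fin m) ℝ)) :
    (φ ^ 2).trace = S - (m : ℝ) * μ ^ 2 ∧
      (A ^ 3).trace ≥
        -(((m : ℝ) - 2) / Real.sqrt ((m : ℝ) * ((m : ℝ) - 1))) *
            Real.sqrt (S - (m : ℝ) * μ ^ 2) ^ 3 +
          3 * μ * (S - (m : ℝ) * μ ^ 2) + (m : ℝ) * μ ^ 3 := by
  have hφs : φ.IsSymm := by
    rw [hφ]
    exact hA.sub (Matrix.isSymm_one.smul μ)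
  have hH : φ.IsHermitian := by
    rw [Matrix.IsHermitian, Matrix.conjTranspose_eq_transpose_of_trivial]
    exact hφs
  have htrφ : φ.trace = 0 := by
    rw [hφ, Matrix.trace_sub, Matrix.trace_smul, Matrix.trace_one, htr]
    simp
    ring
  have e2 : φ ^ 2 = A ^ 2 - (2 * μ) • A + (μ ^ 2) • 1 := by
    rw [hφ]
    simp only [pow_two, Matrix.sub_mul, Matrix.mul_sub, Matrix.smul_mul, Matrix.mul_smul,
      Matrix.mul_one, Matrix.one_mul, smul_smul]
    module
  have ht2 : (φ ^ 2).trace = S - (m : ℝ) * μ ^ 2 := by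
    rw [e2, Matrix.trace_add, Matrix.trace_sub, Matrix.trace_smul, Matrix.trace_smul,
      Matrix.trace_one, htr, htr2]
    simp
    ring
  refine ⟨ht2, ?_⟩
  have hAφ : A = φ + μ • 1 := by rw [hφ, sub_add_cancel]
  have e3 : A ^ 3 = φ ^ 3 + (3 * μ) • φ ^ 2 + (3 * μ ^ 2) • φ + (μ ^ 3) • 1 := by
    rw [hAφ]
    simp only [pow_succ, pow_zero, Matrix.one_mul, one_mul, Matrix.add_mul, Matrix.mul_add,
      Matrix.smul_mul, Matrix.mul_smul, Matrix.mul_one, smul_smul, smul_add]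
    module
  have ht3 : (A ^ 3).trace = (φ ^ 3).trace + 3 * μ * (S - (m : ℝ) * μ ^ 2) + (m : ℝ) * μ ^ 3 := by
    rw [e3, Matrix.trace_add, Matrix.trace_add, Matrix.trace_add, Matrix.trace_smul,
      Matrix.trace_smul, Matrix.trace_smul, Matrix.trace_one, ht2, htrφ]
    simp
    ring
  have h1 : ∑ i, hH.eigenvalues i = 0 := by
    have := trace_pow_eq_sum_pow hH 1
    rw [pow_one] at this
    simpa using this.symm.trans htrφ
  have h2 : ∑ i, (hH.eigenvalues i) ^ 2 = S - (m : ℝ) * μ ^ 2 := by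
    rw [← trace_pow_eq_sum_pow hH 2, ht2]
  have hkey := okumura hm hH.eigenvalues h1
  rw [h2] at hkey
  rw [ht3, ge_iff_le, trace_pow_eq_sum_pow hH 3] at *
  linarith
end
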